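/- The operator T' on V⊗V defined in the sign q-permutation representation satisfies (T')^2 = Id, where V is a Z_2-graded vector space over Q(q). -/

import Mathlib

open RatFunc

/-- Degree of basis vector `v_k`, `k : Fin (m+n)` zero-based: `0` iff `k < m`
(`v_k ∈ V₀`), `1` otherwise (`v_k ∈ V₁`). -/
def degMN (m n : ℕ) (k : Fin (m + n)) : ℕ := if (k : ℕ) < m then 0 else 1

/-- The sign `q`-permutation operator `T'` on `V ⊗ V` over `K = ℚ(q)` (with `q = X`), in
coordinates with respect to the basis `v_k ⊗ v_l` of `V ⊗ V`, where `V = V₀ ⊕ V₁` has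
homogeneous basis `v_1, …, v_{m+n}`:
`T'(v_k ⊗ v_k) = (-1)^{|v_k|} v_k ⊗ v_k`, and for `k ≠ l`,
`T'(v_k ⊗ v_l) = (2(-1)^{|v_k||v_l|}/(q+q⁻¹)) v_l ⊗ v_k ± ((q-q⁻¹)/(q+q⁻¹)) v_k ⊗ v_l`
with sign `+` if `k < l` and `−` if `k > l`. -/
noncomputable def TprimeMN (m n : ℕ) :
    ((Fin (m + n) × Fin (m + n)) → RatFunc ℚ) → ((Fin (m + n) × Fin (m + n)) → RatFunc ℚ) :=
  fun f p =>
    if p.1 = p.2 then ((-1 : RatFunc ℚ) ^ degMN m n p.1) * f p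
    else
      (if (p.1 : ℕ) < (p.2 : ℕ) then (X - X⁻¹) / (X + X⁻¹) else -((X - X⁻¹) / (X + X⁻¹)))
          * f p
        + (2 * (-1 : RatFunc ℚ) ^ (degMN m n p.1 * degMN m n p.2) / (X + X⁻¹)) * f (p.2, p.1)

lemma hXXaux : (X + X⁻¹ : RatFunc ℚ) ≠ 0 := by
  intro h
  have h2 : (X + X⁻¹) * X = (X ^ 2 + 1 : RatFunc ℚ) := by
    rw [add_mul, inv_mul_cancel₀ X_ne_zero]; ring
  rw [h, zero_mul] at h2
  have hp : (Polynomial.X ^ 2 + 1 : Polynomial ℚ) ≠ 0 := by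
    intro hp
    have := congrArg (fun p => Polynomial.coeff p 0) hp
    simp at this
  apply hp
  have : (algebraMap (Polynomial ℚ) (RatFunc ℚ)) (Polynomial.X ^ 2 + 1) = 0 := by
    push_cast [map_add, map_pow, map_one, RatFunc.algebraMap_X]
    exact h2.symm
  exact (FaithfulSMul.algebraMap_eq_zero_iff _ _).mp this

lemma hsAux : ((X - X⁻¹) / (X + X⁻¹)) * ((X - X⁻¹) / (X + X⁻¹))
    + (2 / (X + X⁻¹)) * (2 / (X + X⁻¹)) = (1 : RatFunc ℚ) := by
  rw [div_mul_div_comm, div_mul_div_comm, ← add_div,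
    div_eq_one_iff_eq (mul_ne_zero hXXaux hXXaux)]
  have hx1 : (X : RatFunc ℚ) * X⁻¹ = 1 := mul_inv_cancel₀ X_ne_zero
  linear_combination (-4 : RatFunc ℚ) * hx1

lemma keyAux (E a b : RatFunc ℚ) (hE : E * E = 1) :
    (X - X⁻¹) / (X + X⁻¹) * ((X - X⁻¹) / (X + X⁻¹) * a + 2 * E / (X + X⁻¹) * b)
      + 2 * E / (X + X⁻¹) * (-((X - X⁻¹) / (X + X⁻¹)) * b + 2 * E / (X + X⁻¹) * a) = a := by
  linear_combination a * hsAux + ((2 / (X + X⁻¹)) * (2 / (X + X⁻¹)) * a) * hE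

lemma keyAux' (E a b : RatFunc ℚ) (hE : E * E = 1) :
    -((X - X⁻¹) / (X + X⁻¹)) * (-((X - X⁻¹) / (X + X⁻¹)) * a + 2 * E / (X + X⁻¹) * b)
      + 2 * E / (X + X⁻¹) * ((X - X⁻¹) / (X + X⁻¹) * b + 2 * E / (X + X⁻¹) * a) = a := by
  linear_combination a * hsAux + ((2 / (X + X⁻¹)) * (2 / (X + X⁻¹)) * a) * hE

/-- The operator `T'` of the sign `q`-permutation representation satisfies `(T')² = Id`
on `V ⊗ V`, for `V` a `ℤ₂`-graded vector space over `ℚ(q)`. -/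
theorem stmt_17 (m n : ℕ) :
    ∀ f : (Fin (m + n) × Fin (m + n)) → RatFunc ℚ,
      TprimeMN m n (TprimeMN m n f) = f := by
  intro f
  funext p
  obtain ⟨k, l⟩ := p
  by_cases h : k = l
  · subst h
    show (if (k, k).1 = (k, k).2 then _ else _) = _
    rw [if_pos rfl]
    show ((-1 : RatFunc ℚ) ^ degMN m n k) *
      (if (k, k).1 = (k, k).2 then _ else _) = _
    rw [if_pos rfl, ← mul_assoc, ← pow_add, Even.neg_one_pow (Even.add_self _), one_mul]
  · have hkl : (k : ℕ) ≠ (l : ℕ) := fun hc => h (Fin.ext hc)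
    have hlk : l ≠ k := fun hc => h hc.symm
    have hE2 : ((-1 : RatFunc ℚ) ^ (degMN m n k * degMN m n l)) *
        ((-1 : RatFunc ℚ) ^ (degMN m n k * degMN m n l)) = 1 := by
      rw [← pow_add]; exact Even.neg_one_pow (Even.add_self _)
    have hElk : ((-1 : RatFunc ℚ)) ^ (degMN m n l * degMN m n k)
        = ((-1 : RatFunc ℚ)) ^ (degMN m n k * degMN m n l) := by rw [mul_comm]
    rcases Nat.lt_or_ge (k : ℕ) (l : ℕ) with hlt | hge
    · have hnlt : ¬ (l : ℕ) < (k : ℕ) := by omega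
      simp only [TprimeMN, if_neg h, if_neg hlk, if_pos hlt, if_neg hnlt, hElk]
      exact keyAux _ _ _ hE2
    · have hlt' : (l : ℕ) < (k : ℕ) := by omega
      have hnlt : ¬ (k : ℕ) < (l : ℕ) := by omega
      simp only [TprimeMN, if_neg h, if_neg hlk, if_neg hnlt, if_pos hlt', hElk]
      exact keyAux' _ _ _ hE2
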